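/- Let V₀ be a finite free R⁺-module of rank r with commuting topologically nilpotent Θ_1,…,Θ_d ∈ M_r(R⁺), γ_i acting by exp(−(ζ_p−1)Θ_i), and M = V₀ ⊗_{R⁺} R⁺[ρY_1,…,ρY_d]^∧_pd with Higgs field Θ_M = Σ_i ∂/∂Y_i ⊗ (dlog T_i)/t and diagonal Γ-action (γ_i(Y_j) = Y_j + δ_{ij}(ζ_p−1)). Suppose x_1,…,x_d ∈ H := M^Γ satisfy Θ_i(x_j) = Θ_j(x_i) for all i,j (so ω = Σ x_i ⊗ ρ dlog T_i/t is a degree-1 Higgs cocycle). If m(ω) ∈ M satisfies Θ_M(m(ω)) = ω (with zero constant term), then for each i, (γ_i − 1)(m(ω)) = −ρ(ζ_p−1) F(Θ_i) exp(−Σ_k Θ_k Y_k) x_i, where F(X) = (exp(−(ζ_p−1)X) − 1)/((ζ_p−1)X). Consequently the image of ω in H^1(Γ, V₀) lies in ρ(ζ_p−1)·H^1(Γ, V₀). -/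

import Mathlib

open Filter Topology

noncomputable section

lemma ofFn_update' {α : Type*} {d : ℕ} (f : Fin d → α) (j : Fin d) (y : α) :
    List.ofFn (Function.update f j y) = (List.ofFn f).set j y := by
  apply List.ext_getElem
  · simp
  · intro i h1 h2
    simp only [List.getElem_ofFn, List.getElem_set, Function.update_apply]
    simp only [List.length_ofFn] at h1
    by_cases e : (⟨i, h1⟩ : Fin d) = j
    · rw [if_pos e, if_pos (by rw [← e])]
    · rw [if_neg e, if_neg (fun hh => e (by ext; exact hh.symm))]

lemma list_set_self' {α : Type*} (l : List α) (j : ℕ) (h : j < l.length) :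
    l.set j l[j] = l := by
  apply List.ext_getElem
  · simp
  · intro i h1 h2
    rw [List.getElem_set]
    split
    · subst ‹j = i›; rfl
    · rfl

lemma prod_ofFn_update {M : Type*} [Monoid M] {d : ℕ} (f : Fin d → M) (j : Fin d) (x : M)
    (h : ∀ k, Commute x (f k)) :
    (List.ofFn (Function.update f j (x * f j))).prod = x * (List.ofFn f).prod := by
  have hj : (j : ℕ) < (List.ofFn f).length := by simp
  have hT : Commute x ((List.ofFn f).take j).prod := by
    apply Commute.list_prod_right
    intro y hy
    have := List.mem_ofFn.mp (List.mem_of_mem_take hy)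
    obtain ⟨k, rfl⟩ := this
    exact h k
  have hgj : (List.ofFn f)[(j:ℕ)] = f j := by simp
  have e1 : (List.ofFn f) = ((List.ofFn f).set j (f j)) := by
    rw [← hgj]; exact (list_set_self' _ _ hj).symm
  rw [ofFn_update', List.prod_set, if_pos hj]
  conv_rhs => rw [e1, List.prod_set, if_pos hj]
  rw [← mul_assoc, ← mul_assoc, ← mul_assoc, hT.eq]

lemma hasSum_mulVec {R : Type*} [CommRing R] [UniformSpace R] [IsUniformAddGroup R]
    [IsTopologicalRing R] {r : ℕ} {c : ℕ → R} {M G : Matrix (Fin r) (Fin r) R}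
    (hG : ∀ a b, HasSum (fun l : ℕ => c l * (M ^ l) a b) (G a b))
    (w : Fin r → R) (j : Fin r) :
    HasSum (fun l : ℕ => c l * ((M ^ l).mulVec w) j) (G.mulVec w j) := by
  have : ∀ b : Fin r, HasSum (fun l : ℕ => c l * (M ^ l) j b * w b) (G j b * w b) :=
    fun b => (hG j b).mul_right (w b)
  have hs := hasSum_sum (f := fun b (l : ℕ) => c l * (M ^ l) j b * w b)
    (fun b _ => this b) (s := Finset.univ)
  convert hs using 1
  funext l
  simp only [Matrix.mulVec, dotProduct, Finset.mul_sum, mul_assoc]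
  rfl

lemma matrix_comm_of_hasSum {R : Type*} [CommRing R] [UniformSpace R] [IsUniformAddGroup R]
    [IsTopologicalRing R] [T2Space R] {r : ℕ} {c : ℕ → R} {M G C : Matrix (Fin r) (Fin r) R}
    (hG : ∀ a b, HasSum (fun l : ℕ => c l * (M ^ l) a b) (G a b))
    (hC : ∀ l : ℕ, M ^ l * C = C * M ^ l) :
    G * C = C * G := by
  ext a b
  have h1 : HasSum (fun l : ℕ => c l * (M ^ l * C) a b) ((G * C) a b) := by
    have : ∀ k : Fin r, HasSum (fun l : ℕ => c l * (M ^ l) a k * C k b) (G a k * C k b) :=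
      fun k => (hG a k).mul_right (C k b)
    have hs := hasSum_sum (f := fun k (l : ℕ) => c l * (M ^ l) a k * C k b)
      (fun k _ => this k) (s := Finset.univ)
    convert hs using 1
    funext l; simp only [Matrix.mul_apply, Finset.mul_sum, mul_assoc]
    exact Matrix.mul_apply
  have h2 : HasSum (fun l : ℕ => c l * (C * M ^ l) a b) ((C * G) a b) := by
    have : ∀ k : Fin r, HasSum (fun l : ℕ => C a k * (c l * (M ^ l) k b)) (C a k * G k b) :=
      fun k => (hG k b).mul_left (C a k)
    have hs := hasSum_sum (f := fun k (l : ℕ) => C a k * (c l * (M ^ l) k b))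
      (fun k _ => this k) (s := Finset.univ)
    convert hs using 1
    funext l
    simp only [Matrix.mul_apply, Finset.mul_sum]
    apply Finset.sum_congr rfl
    intro k _
    ring
    exact Matrix.mul_apply
  have h1' : HasSum (fun l : ℕ => c l * (M ^ l * C) a b) ((C * G) a b) := by
    convert h2 using 2 with l
    rw [hC l]
  exact h1.unique h1'

section regular
variable {p : ℕ} [Fact (Nat.Prime p)] {R : Type*} [CommRing R] [Algebra ℤ_[p] R]

lemma isUnit_natCast_of_prime_ne {q : ℕ} (hq : q.Prime) (hne : q ≠ p) : IsUnit ((q : ℤ_[p])) := by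
  rw [PadicInt.isUnit_iff]
  have hle : ‖(q : ℤ_[p])‖ ≤ 1 := PadicInt.norm_le_one _
  have hnd : ¬ ((p : ℤ) ∣ (q : ℤ)) := by
    rw [Int.natCast_dvd_natCast]
    intro h
    exact hne ((Nat.prime_dvd_prime_iff_eq (Fact.out) hq).mp h).symm
  have := (PadicInt.norm_int_lt_one_iff_dvd (q : ℤ)).not.mpr hnd
  push_cast at this
  push_neg at this
  exact le_antisymm hle this

lemma nat_regular (htor : ∀ y : R, (p : R) * y = 0 → y = 0) :
    ∀ N : ℕ, N ≠ 0 → ∀ y : R, (N : R) * y = 0 → y = 0 := by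
  intro N
  induction N using Nat.strong_induction_on with
  | _ N ih =>
    intro hN y hy
    rcases eq_or_ne N 1 with rfl | h1
    · simpa using hy
    · obtain ⟨q, hq, hdvd⟩ := Nat.exists_prime_and_dvd h1
      obtain ⟨N', rfl⟩ := hdvd
      have hN' : N' ≠ 0 := by rintro rfl; simp at hN
      have hlt : N' < q * N' := by
        calc N' = 1 * N' := (one_mul N').symm
        _ < q * N' := Nat.mul_lt_mul_of_lt_of_le hq.one_lt le_rfl (Nat.pos_of_ne_zero hN')
      have hy' : (q : R) * ((N' : R) * y) = 0 := by
        rw [← mul_assoc]; push_cast at hy ⊢; exact hy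
      rcases eq_or_ne q p with rfl | hne
      · exact ih N' hlt hN' y (htor _ hy')
      · have hu : IsUnit ((q : R)) := by
          have : ((q : R)) = algebraMap ℤ_[p] R ((q : ℤ_[p])) := by
            rw [map_natCast]
          rw [this]
          exact (isUnit_natCast_of_prime_ne hq hne).map _
        have : (N' : R) * y = 0 := by
          obtain ⟨v, hv⟩ := hu
          have := congrArg (fun z => (↑v⁻¹ : R) * z) hy'
          simpa [← hv, ← mul_assoc] using this
        exact ih N' hlt hN' y this

end regular

def Aprod {R : Type*} [CommRing R] (r d : ℕ) (Ξ : Fin d → Matrix (Fin r) (Fin r) R)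
    (n : Fin d → ℕ) : Matrix (Fin r) (Fin r) R :=
  (List.ofFn (fun t => (Ξ t) ^ (n t))).prod

lemma Aprod_zero {R : Type*} [CommRing R] (r d : ℕ) (Ξ : Fin d → Matrix (Fin r) (Fin r) R) :
    Aprod r d Ξ 0 = 1 := by
  simp [Aprod]

lemma Aprod_comm {R : Type*} [CommRing R] (r d : ℕ) (Ξ : Fin d → Matrix (Fin r) (Fin r) R)
    (hΞcomm : ∀ i j, Ξ i * Ξ j = Ξ j * Ξ i) (n : Fin d → ℕ) (k : Fin d) :
    Commute (Ξ k) (Aprod r d Ξ n) := by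
  apply Commute.list_prod_right
  intro y hy
  obtain ⟨t, rfl⟩ := List.mem_ofFn.mp hy
  exact Commute.pow_right (hΞcomm k t) (n t)

lemma Aprod_succ {R : Type*} [CommRing R] (r d : ℕ) (Ξ : Fin d → Matrix (Fin r) (Fin r) R)
    (hΞcomm : ∀ i j, Ξ i * Ξ j = Ξ j * Ξ i) (n : Fin d → ℕ) (j : Fin d) :
    Aprod r d Ξ (Function.update n j (n j + 1)) = Ξ j * Aprod r d Ξ n := by
  have hfun : (fun t => Ξ t ^ (Function.update n j (n j + 1)) t)
      = Function.update (fun t => Ξ t ^ n t) j (Ξ j * Ξ j ^ n j) := by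
    funext t
    rcases eq_or_ne t j with rfl | e
    · simp [pow_succ']
    · simp [Function.update_of_ne e]
  show (List.ofFn fun t => Ξ t ^ (Function.update n j (n j + 1)) t).prod = _
  rw [hfun, prod_ofFn_update _ _ _ (fun k => Commute.pow_right (hΞcomm j k) (n k))]
  rfl




/-- The coefficients of `exp(−Σ_k Θ_k Y_k)·v` in `M = V₀ ⊗ R⁺[ρY₁,…,ρY_d]^∧_pd` (w.r.t. the
basis `ρ^{|n|}Y^{[n]}`, and writing `Θ_k = ρ Ξ_k`): the coefficient at the multi-index `n`
is `(−1)^{|n|} (∏_k Ξ_k^{n_k}) v`. -/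
def embedC (R : Type*) [CommRing R] (r d : ℕ) (Ξ : Fin d → Matrix (Fin r) (Fin r) R)
    (v : Fin r → R) (n : Fin d → ℕ) : Fin r → R :=
  ((-1 : R) ^ (∑ k, n k)) • ((List.ofFn (fun k => (Ξ k) ^ (n k))).prod).mulVec v

/-- Let `V₀` be finite free of rank `r` over `R⁺` with commuting
topologically nilpotent `Θ_1,…,Θ_d = ρΞ_1,…,ρΞ_d`, `γ_i` acting by `exp(−(ζ_p−1)Θ_i)`, and
`M = V₀ ⊗ R⁺[ρY₁,…,ρY_d]^∧_pd` with Higgs field `Θ_M` and diagonal `Γ`-action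
(`γ_i(Y_j) = Y_j + δ_{ij}(ζ_p−1)`, trivial on the fixed part `H = M^Γ`).  Suppose
`x_1,…,x_d ∈ H` satisfy `Θ_i(x_j) = Θ_j(x_i)` (a degree-1 Higgs cocycle
`ω = Σ x_i ⊗ ρ dlog T_i/t`), and `m(ω) ∈ M` solves `Θ_M(m(ω)) = ω` with zero constant term
(the recursion `h_{n+1_i} = δ_{n,0}·x_i − ρ^{−1}Θ_i(h_n)`).  Then for each `i`,
`(γ_i − 1)(m(ω)) = −ρ(ζ_p−1) F(Θ_i) exp(−Σ_k Θ_k Y_k) x_i`, where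
`F(X) = (exp(−(ζ_p−1)X) − 1)/((ζ_p−1)X)`; consequently the class of `ω` in `H¹(Γ, V₀)`
lies in `ρ(ζ_p−1)·H¹(Γ, V₀)` (it is `ρ(ζ_p−1)` times the class of a Koszul 1-cocycle `u`). -/
theorem stmt_19 (p : ℕ) [Fact (Nat.Prime p)]
    (R : Type*) [CommRing R] [UniformSpace R] [IsUniformAddGroup R]
    [IsTopologicalRing R] [CompleteSpace R] [T2Space R]
    [Algebra ℤ_[p] R]
    (hadic : IsAdic (Ideal.span {(p : R)}))
    (htor : ∀ y : R, (p : R) * y = 0 → y = 0)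
    (ρ : R) (hρsmall : ∃ c : R, ρ ^ (p - 1) = (p : R) * c)
    (hρreg : ∀ y : R, ρ * y = 0 → y = 0)
    (ρpd : ℕ → R) (hρpd0 : ρpd 0 = 1) (hρpd1 : ρpd 1 = ρ)
    (hρpdfac : ∀ k : ℕ, (k.factorial : R) * ρpd k = ρ ^ k)
    (ζ : R) (hζ : IsPrimitiveRoot ζ p) (ε : R) (hε : ε = ζ - 1)
    (εpd : ℕ → R) (hεpd0 : εpd 0 = 1) (hεpd1 : εpd 1 = ε)
    (hεpdfac : ∀ k : ℕ, (k.factorial : R) * εpd k = ε ^ k)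
    (εq : ℕ → R) (hεq : ∀ k : ℕ, ε * εq k = εpd (k + 1))
    (r d : ℕ)
    (Θ Ξ : Fin d → Matrix (Fin r) (Fin r) R)
    (hΘρ : ∀ i, Θ i = ρ • Ξ i)
    (hΘcomm : ∀ i j, Θ i * Θ j = Θ j * Θ i)
    (hΞcomm : ∀ i j, Ξ i * Ξ j = Ξ j * Ξ i)
    (hΘnil : ∀ (i : Fin d) (a b : Fin r),
      Tendsto (fun n : ℕ => ((Θ i) ^ n) a b) atTop (𝓝 0))
    -- `P i = exp(−(ζ_p−1)Θ_i)`, the matrix of `γ_i` on `V₀`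
    (P : Fin d → Matrix (Fin r) (Fin r) R)
    (hP : ∀ (i : Fin d) (a b : Fin r),
      HasSum (fun l : ℕ => ((-1 : R) ^ l * εpd l) * ((Θ i) ^ l) a b) ((P i) a b))
    -- `F(Θ_i) = Σ_{n≥0} (−1)^{n+1} ((ζ_p−1)^n/(n+1)!) Θ_i^n`
    (Fmat : Fin d → Matrix (Fin r) (Fin r) R)
    (hF : ∀ (i : Fin d) (a b : Fin r),
      HasSum (fun l : ℕ => ((-1 : R) ^ (l + 1) * εq l) * ((Θ i) ^ l) a b) ((Fmat i) a b))
    -- the Higgs 1-cocycle `ω = Σ_i x_i ⊗ ρ dlog T_i / t`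
    (x : Fin d → Fin r → R)
    (hx : ∀ i j, (Θ i).mulVec (x j) = (Θ j).mulVec (x i))
    -- `m(ω) ∈ M`, i.e. the coefficients of a solution of `Θ_M(m(ω)) = ω` with zero
    -- constant term
    (m : (Fin d → ℕ) → Fin r → R)
    (hmM : Tendsto m cofinite (𝓝 0))
    (hm0 : m 0 = 0)
    (hmrec : ∀ (i : Fin d) (n : Fin d → ℕ),
      m (Function.update n i (n i + 1))
        = (if n = 0 then x i else 0) - (Ξ i).mulVec (m n)) :
    -- `(γ_i − 1)(m(ω)) = −ρ(ζ_p−1)·F(Θ_i)·exp(−Σ_k Θ_k Y_k)·x_i`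
    (∀ (i : Fin d) (n : Fin d → ℕ) (j : Fin r),
      (∑' k : ℕ, ρpd k * ε ^ k * m (Function.update n i (n i + k)) j) - m n j
        = -(ρ * ε) * ((Fmat i).mulVec (embedC R r d Ξ (x i) n)) j) ∧
    -- consequently the class of `ω` in `H¹(Γ, V₀)` lies in `ρ(ζ_p−1)·H¹(Γ, V₀)`
    (∃ u : Fin d → Fin r → R,
      (∀ i i' : Fin d,
        (P i).mulVec (u i') - u i' = (P i').mulVec (u i) - u i) ∧
      ∀ (i : Fin d) (n : Fin d → ℕ) (j : Fin r),
        (∑' k : ℕ, ρpd k * ε ^ k * m (Function.update n i (n i + k)) j) - m n j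
          = (ρ * ε) * (embedC R r d Ξ (u i) n) j) := by
  classical
  have hreg : ∀ N : ℕ, N ≠ 0 → ∀ y : R, (N : R) * y = 0 → y = 0 := nat_regular htor
  have hscal : ∀ k : ℕ, ρpd k * ε ^ k = ρ ^ k * εpd k := by
    intro k
    have h : (k.factorial : R) * (ρpd k * ε ^ k - ρ ^ k * εpd k) = 0 := by
      rw [mul_sub, ← mul_assoc, hρpdfac k, mul_left_comm, hεpdfac k, sub_self]
    exact sub_eq_zero.mp (hreg _ (Nat.factorial_ne_zero k) _ h)
  have hxsym : ∀ i j : Fin d, (Ξ i).mulVec (x j) = (Ξ j).mulVec (x i) := by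
    intro i j
    funext a
    have h1 := congrFun (hx i j) a
    rw [hΘρ i, hΘρ j, Matrix.smul_mulVec, Matrix.smul_mulVec] at h1
    have h2 : ρ * ((Ξ i).mulVec (x j) a - (Ξ j).mulVec (x i) a) = 0 := by
      simp only [Pi.smul_apply, smul_eq_mul] at h1
      rw [mul_sub, h1, sub_self]
    exact sub_eq_zero.mp (hρreg _ h2)
  have hAcomm : ∀ (n : Fin d → ℕ) (k : Fin d), Commute (Ξ k) (Aprod r d Ξ n) :=
    fun n k => Aprod_comm r d Ξ hΞcomm n k
  have hsum_succ : ∀ (n : Fin d → ℕ) (j : Fin d),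
      (∑ t, Function.update n j (n j + 1) t) = (∑ t, n t) + 1 := by
    intro n j
    have h2 : ∑ t, n t = n j + ∑ t ∈ Finset.univ \ {j}, n t := by
      conv_lhs => rw [← Function.update_eq_self j n]
      rw [Finset.sum_update_of_mem (Finset.mem_univ j)]
    rw [Finset.sum_update_of_mem (Finset.mem_univ j), h2]
    ring
  -- key formula for `Ξ i *ᵥ m n`
  have mC : ∀ s : ℕ, ∀ n : Fin d → ℕ, (∑ t, n t) = s → n ≠ 0 → ∀ i : Fin d,
      (Ξ i).mulVec (m n) = ((-1 : R) ^ (s + 1)) • (Aprod r d Ξ n).mulVec (x i) := by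
    intro s
    induction s using Nat.strong_induction_on with
    | _ s ih =>
      intro n hs hn i
      obtain ⟨j, hj⟩ : ∃ j, n j ≠ 0 := by
        by_contra h
        push_neg at h
        exact hn (funext fun t => h t)
      set n' := Function.update n j (n j - 1) with hn'def
      have hupd : Function.update n' j (n' j + 1) = n := by
        funext t
        rcases eq_or_ne t j with rfl | e
        · simp only [hn'def, Function.update_self]
          omega
        · simp [hn'def, Function.update_of_ne e]
      have hrec := hmrec j n'
      rw [hupd] at hrec
      have hsum' : (∑ t, n' t) + 1 = s := by
        have h1 := hsum_succ n' j
        rw [hupd] at h1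
        omega
      by_cases h0 : n' = 0
      · rw [h0] at hrec
        have hmn : m n = x j := by rw [hrec, if_pos rfl, hm0, Matrix.mulVec_zero, sub_zero]
        have hAn : Aprod r d Ξ n = Ξ j := by
          rw [← hupd, h0, Aprod_succ r d Ξ hΞcomm, Aprod_zero, mul_one]
        have hs1 : s = 1 := by
          rw [h0] at hsum'
          simpa using hsum'.symm
        rw [hmn, hAn, hs1, hxsym i j]
        norm_num
      · have hih := ih (∑ t, n' t) (by omega) n' rfl h0 i
        have hmn : m n = -((Ξ j).mulVec (m n')) := by rw [hrec, if_neg h0, zero_sub]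
        rw [hmn, Matrix.mulVec_neg, Matrix.mulVec_mulVec, hΞcomm i j, ← Matrix.mulVec_mulVec,
          hih, Matrix.mulVec_smul, Matrix.mulVec_mulVec, ← Aprod_succ r d Ξ hΞcomm n' j, hupd,
          ← hsum', pow_succ (-1 : R) (∑ t, n' t + 1), mul_neg_one, neg_smul]
  -- closed formula for `m (n + (k+1)·e_i)`
  have mD : ∀ (i : Fin d) (n : Fin d → ℕ) (k : ℕ),
      m (Function.update n i (n i + (k + 1)))
        = ((-1 : R) ^ ((∑ t, n t) + k)) • ((Aprod r d Ξ n * Ξ i ^ k).mulVec (x i)) := by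
    intro i n k
    induction k with
    | zero =>
      simp only [Nat.zero_add, Nat.add_zero, pow_zero, mul_one]
      by_cases h0 : n = 0
      · subst h0
        rw [hmrec i 0, if_pos rfl, hm0, Matrix.mulVec_zero, sub_zero]
        simp [Aprod_zero]
      · rw [hmrec i n, if_neg h0, zero_sub, mC (∑ t, n t) n rfl h0 i,
          pow_succ (-1 : R) (∑ t, n t), mul_neg_one, neg_smul, neg_neg]
    | succ k ihk =>
      have hupd : Function.update (Function.update n i (n i + (k + 1))) i
          ((Function.update n i (n i + (k + 1))) i + 1)
            = Function.update n i (n i + (k + 1 + 1)) := by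
        funext t
        rcases eq_or_ne t i with rfl | e
        · simp only [Function.update_self]
          omega
        · simp [Function.update_of_ne e]
      have hN0 : Function.update n i (n i + (k + 1)) ≠ 0 := by
        intro h
        have := congrFun h i
        simp [Function.update_self] at this
      have hrec := hmrec i (Function.update n i (n i + (k + 1)))
      rw [hupd] at hrec
      have hmm : Ξ i * (Aprod r d Ξ n * Ξ i ^ k) = Aprod r d Ξ n * Ξ i ^ (k + 1) := by
        rw [← mul_assoc, (hAcomm n i).eq, mul_assoc, ← pow_succ']
      rw [hrec, if_neg hN0, ihk, zero_sub, Matrix.mulVec_smul, Matrix.mulVec_mulVec, hmm,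
        ← add_assoc, pow_succ (-1 : R) (∑ t, n t + k), mul_neg_one, neg_smul]
  -- part 1
  have part1 : ∀ (i : Fin d) (n : Fin d → ℕ) (j : Fin r),
      (∑' k : ℕ, ρpd k * ε ^ k * m (Function.update n i (n i + k)) j) - m n j
        = -(ρ * ε) * ((Fmat i).mulVec (embedC R r d Ξ (x i) n)) j := by
    intro i n j
    have hwE : embedC R r d Ξ (x i) n
        = ((-1 : R) ^ (∑ t, n t)) • (Aprod r d Ξ n).mulVec (x i) := rfl
    set w : Fin r → R := ((-1 : R) ^ (∑ t, n t)) • (Aprod r d Ξ n).mulVec (x i) with hw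
    have hFs : HasSum (fun l : ℕ => ((-1 : R) ^ (l + 1) * εq l) * ((Θ i ^ l).mulVec w) j)
        ((Fmat i).mulVec w j) := hasSum_mulVec (hF i) w j
    have hFs2 := hFs.mul_left (-(ρ * ε))
    have hkey : ∀ l : ℕ, -(ρ * ε) * (((-1 : R) ^ (l + 1) * εq l) * ((Θ i ^ l).mulVec w) j)
        = ρpd (l + 1) * ε ^ (l + 1) * m (Function.update n i (n i + (l + 1))) j := by
      intro l
      have h1 : (Θ i ^ l).mulVec w
          = (ρ ^ l * (-1 : R) ^ (∑ t, n t)) • ((Aprod r d Ξ n * Ξ i ^ l).mulVec (x i)) := by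
        rw [hw, hΘρ i, smul_pow, Matrix.smul_mulVec, Matrix.mulVec_smul,
          Matrix.mulVec_mulVec, ((hAcomm n i).pow_left l).eq, smul_smul]
      rw [mD i n l, h1]
      simp only [Pi.smul_apply, smul_eq_mul]
      rw [hscal (l + 1), ← hεq l]
      ring
    have hfun : (fun l : ℕ => ρpd (l + 1) * ε ^ (l + 1)
          * m (Function.update n i (n i + (l + 1))) j)
        = fun l : ℕ => -(ρ * ε) * (((-1 : R) ^ (l + 1) * εq l) * ((Θ i ^ l).mulVec w) j) :=
      funext fun l => (hkey l).symm
    have hFs3 : HasSum (fun l : ℕ => ρpd (l + 1) * ε ^ (l + 1)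
          * m (Function.update n i (n i + (l + 1))) j)
        (-(ρ * ε) * ((Fmat i).mulVec w j)) := by
      rw [hfun]
      exact hFs2
    have hFs4 := (hasSum_nat_add_iff
      (f := fun k : ℕ => ρpd k * ε ^ k * m (Function.update n i (n i + k)) j) 1).mp hFs3
    have hf0 : ρpd 0 * ε ^ 0 * m (Function.update n i (n i + 0)) j = m n j := by
      rw [hρpd0, pow_zero, Nat.add_zero, Function.update_eq_self]
      ring
    rw [Finset.range_one, Finset.sum_singleton, hf0] at hFs4
    have ht := hFs4.tsum_eq
    rw [ht, hwE]
    ring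
  refine ⟨part1, ?_⟩
  -- commutation infrastructure
  have hΘcommΞ : ∀ i k : Fin d, Commute (Θ i) (Ξ k) := by
    intro i k
    rw [hΘρ i]
    exact Commute.smul_left (hΞcomm i k) ρ
  have hΘA : ∀ (i : Fin d) (n : Fin d → ℕ), Commute (Θ i) (Aprod r d Ξ n) := by
    intro i n
    apply Commute.list_prod_right
    intro y hy
    obtain ⟨t, rfl⟩ := List.mem_ofFn.mp hy
    exact Commute.pow_right (hΘcommΞ i t) (n t)
  have hFC : ∀ (i : Fin d) (C : Matrix (Fin r) (Fin r) R),
      Commute (Θ i) C → Fmat i * C = C * Fmat i := by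
    intro i C hC
    exact matrix_comm_of_hasSum (hF i) (fun l => (hC.pow_left l).eq)
  have hFΘ : ∀ i k : Fin d, Fmat i * Θ k = Θ k * Fmat i := fun i k => hFC i (Θ k) (hΘcomm i k)
  have hFF : ∀ i i' : Fin d, Fmat i * Fmat i' = Fmat i' * Fmat i :=
    fun i i' => hFC i (Fmat i') (hFΘ i' i).symm
  -- `P i - 1 = ε • (Θ i * Fmat i)`
  have hPF : ∀ i : Fin d, P i - 1 = ε • (Θ i * Fmat i) := by
    intro i
    ext a b
    have h2 : HasSum (fun l : ℕ => ((-1 : R) ^ l * εpd l) * ((Θ i) ^ l) a b)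
        ((ε • (Θ i * Fmat i)) a b
          + ∑ l ∈ Finset.range 1, ((-1 : R) ^ l * εpd l) * ((Θ i) ^ l) a b) := by
      apply (hasSum_nat_add_iff
        (f := fun l : ℕ => ((-1 : R) ^ l * εpd l) * ((Θ i) ^ l) a b) 1).mp
      have hstep : ∀ k : Fin r, HasSum
          (fun l : ℕ => (Θ i) a k * (((-1 : R) ^ (l + 1) * εq l) * ((Θ i) ^ l) k b))
          ((Θ i) a k * (Fmat i) k b) := fun k => (hF i k b).mul_left _
      have hs := hasSum_sum (s := Finset.univ) (fun k _ => hstep k)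
      have hs2 := hs.mul_left ε
      convert hs2 using 1
      · rfl
      funext l
      show ((-1 : R) ^ (l + 1) * εpd (l + 1)) * ((Θ i) ^ (l + 1)) a b = _
      rw [pow_succ' (Θ i) l, Matrix.mul_apply, ← hεq l, Finset.mul_sum, Finset.mul_sum]
      apply Finset.sum_congr rfl
      intro k _
      ring
      rw [Matrix.smul_apply, Matrix.mul_apply, smul_eq_mul]
    have h3 := (hP i a b).unique h2
    rw [Finset.range_one, Finset.sum_singleton] at h3
    simp only [pow_zero, one_mul, hεpd0, mul_one] at h3
    rw [Matrix.sub_apply, h3]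
    ring
  refine ⟨fun i => -(Fmat i).mulVec (x i), ?_, ?_⟩
  · -- Koszul cocycle condition
    have main : ∀ a b : Fin d,
        (P a).mulVec (-(Fmat b).mulVec (x b)) - -(Fmat b).mulVec (x b)
          = -(ε • ((Fmat a * Fmat b).mulVec ((Θ b).mulVec (x a)))) := by
      intro a b
      have h1 : (P a).mulVec (-(Fmat b).mulVec (x b)) - -(Fmat b).mulVec (x b)
          = (P a - 1).mulVec (-(Fmat b).mulVec (x b)) := by
        rw [Matrix.sub_mulVec, Matrix.one_mulVec]
      rw [h1, hPF a, Matrix.smul_mulVec, Matrix.mulVec_neg, Matrix.mulVec_mulVec,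
        smul_neg]
      congr 1
      have hm2 : Θ a * Fmat a * Fmat b = Fmat a * Fmat b * Θ a := by
        rw [← hFΘ a a, mul_assoc, ← hFΘ b a, ← mul_assoc]
      rw [hm2, ← Matrix.mulVec_mulVec, hx a b]
    intro i i'
    show (P i).mulVec (-(Fmat i').mulVec (x i')) - -(Fmat i').mulVec (x i')
        = (P i').mulVec (-(Fmat i).mulVec (x i)) - -(Fmat i).mulVec (x i)
    rw [main i i', main i' i, hFF i' i, hx i i']
  · -- the class is `ρε` times the cocycle `u`
    intro i n j
    rw [part1 i n j]
    have hFA : Fmat i * Aprod r d Ξ n = Aprod r d Ξ n * Fmat i := hFC i _ (hΘA i n)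
    have e1 : embedC R r d Ξ (x i) n
        = ((-1 : R) ^ (∑ t, n t)) • (Aprod r d Ξ n).mulVec (x i) := rfl
    have e2 : embedC R r d Ξ (-(Fmat i).mulVec (x i)) n
        = ((-1 : R) ^ (∑ t, n t)) • (Aprod r d Ξ n).mulVec (-(Fmat i).mulVec (x i)) := rfl
    show -(ρ * ε) * ((Fmat i).mulVec (embedC R r d Ξ (x i) n)) j
        = (ρ * ε) * (embedC R r d Ξ (-(Fmat i).mulVec (x i)) n) j
    rw [e1, e2, Matrix.mulVec_smul, Matrix.mulVec_mulVec, hFA, Matrix.mulVec_neg,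
      Matrix.mulVec_mulVec]
    simp only [Pi.smul_apply, Pi.neg_apply, smul_eq_mul]
    ring

end
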